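/- Let h ≥ k ≥ 1 be integers. There exists a polynomial z_{k,h}(t) ∈ ℤ[t], depending only on k and h, such that for every matroid M of rank k, every stressed hyperplane H of M with |H| = h, and the relaxation M̃ of M at H, one has Z_{M̃}(t) = Z_M(t) + z_{k,h}(t). -/

import Mathlib

open Polynomial Matroid Set
open scoped Classical
set_option linter.unusedSectionVars false

namespace KLPaper

variable {α : Type} [Fintype α]

/-- The contraction `M ⧸ C` of a set `C` in a matroid `M`, defined (as is standard,
see e.g. Oxley, Prop. 3.1.1) as the dual of the deletion of `C` from the dual matroid,
where deletion of `C` is restriction to `M.E \ C`.  Its ground set is `M.E \ C`. -/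
noncomputable def contract (M : Matroid α) (C : Set α) : Matroid α :=
  (M✶ ↾ (M.E \ C))✶

scoped infixl:75 " ⧸ " => KLPaper.contract

/-- The rank `rk M S` of a set `S` in a matroid `M`: the largest cardinality of an
independent subset of `S`. -/
noncomputable def rk (M : Matroid α) (S : Set α) : ℕ :=
  sSup {n | ∃ I, I ⊆ S ∧ M.Indep I ∧ I.ncard = n}

/-- The rank of a matroid: the rank of its ground set. -/
noncomputable def rank (M : Matroid α) : ℕ := rk M M.E

/-- A circuit of a matroid: a minimal dependent set, i.e. a dependent subset of the
ground set all of whose proper subsets are independent. -/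
def IsCircuit (M : Matroid α) (C : Set α) : Prop :=
  M.Dep C ∧ ∀ D ⊂ C, M.Indep D

/-- A hyperplane of a matroid: a maximal proper flat. -/
def IsHyperplane (M : Matroid α) (H : Set α) : Prop :=
  M.IsFlat H ∧ H ≠ M.E ∧ ∀ F, M.IsFlat F → H ⊂ F → F = M.E

/-- A stressed hyperplane of a matroid `M` of rank `k`: a hyperplane `H` such that every
`k`-element subset of `H` is a circuit of `M`. -/
def Stressed (M : Matroid α) (H : Set α) : Prop :=
  IsHyperplane M H ∧ ∀ C ⊆ H, C.ncard = rank M → IsCircuit M C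

/-- `Mt` is the relaxation of `M` at the stressed hyperplane `H`: the matroid on the same
ground set whose bases are exactly the bases of `M` together with all `(rank M)`-element
subsets of `H`. -/
def IsRelaxation (M Mt : Matroid α) (H : Set α) : Prop :=
  Mt.E = M.E ∧ ∀ B : Set α, Mt.IsBase B ↔ (M.IsBase B ∨ (B ⊆ H ∧ B.ncard = rank M))

/-- The characterization of the Kazhdan–Lusztig polynomials `P_M` and the `Z`-polynomials
`Z_M` of matroids (on a fixed finite type): (i) both equal `1` on matroids with empty
ground set; (ii) `2 · deg P_M < rk M` when the ground set is nonempty (the zero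
polynomial being allowed); (iii) `Z_M` is palindromic of degree `rk M`;
(iv) `Z_M = Σ_{S ⊆ E} t^{rk S} · P_{M ⧸ S}`, the sum over all subsets `S` of `E`. -/
def PZaxioms (P Z : Matroid α → Polynomial ℤ) : Prop :=
  (∀ M : Matroid α, M.E = ∅ → P M = 1 ∧ Z M = 1) ∧
  (∀ M : Matroid α, M.E ≠ ∅ → (P M = 0 ∨ 2 * (P M).natDegree < rank M)) ∧
  (∀ M : Matroid α, (Z M).natDegree ≤ rank M ∧
      ∀ i ≤ rank M, (Z M).coeff i = (Z M).coeff (rank M - i)) ∧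
  (∀ M : Matroid α,
      Z M = ∑ S ∈ M.E.toFinite.toFinset.powerset,
        X ^ (rk M (S : Set α)) * P (M ⧸ (S : Set α)))

lemma rank_def (M : Matroid α) : rank M = rk M M.E := rfl

lemma rkset_nonempty (M : Matroid α) (S : Set α) :
    {n | ∃ I, I ⊆ S ∧ M.Indep I ∧ I.ncard = n}.Nonempty :=
  ⟨0, ∅, empty_subset _, M.empty_indep, by simp⟩

lemma rkset_bdd (M : Matroid α) (S : Set α) :
    BddAbove {n | ∃ I, I ⊆ S ∧ M.Indep I ∧ I.ncard = n} := by
  refine ⟨Fintype.card α, fun n ⟨I, _, _, hc⟩ => ?_⟩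
  rw [← hc]
  have := Set.ncard_le_ncard (subset_univ I) (toFinite _)
  simpa [Set.ncard_univ, Nat.card_eq_fintype_card] using this

lemma le_rk {M : Matroid α} {I S : Set α} (hI : M.Indep I) (hIS : I ⊆ S) :
    I.ncard ≤ rk M S :=
  le_csSup (rkset_bdd M S) ⟨I, hIS, hI, rfl⟩

lemma exists_rk_witness (M : Matroid α) (S : Set α) :
    ∃ I, I ⊆ S ∧ M.Indep I ∧ I.ncard = rk M S :=
  Nat.sSup_mem (rkset_nonempty M S) (rkset_bdd M S)

lemma rk_le_ncard (M : Matroid α) (S : Set α) : rk M S ≤ S.ncard := by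
  obtain ⟨I, hIS, _, hc⟩ := exists_rk_witness M S
  rw [← hc]
  exact Set.ncard_le_ncard hIS (toFinite _)

lemma rk_mono (M : Matroid α) {S T : Set α} (h : S ⊆ T) : rk M S ≤ rk M T := by
  obtain ⟨I, hIS, hI, hc⟩ := exists_rk_witness M S
  rw [← hc]
  exact le_rk hI (hIS.trans h)

@[simp] lemma rk_empty (M : Matroid α) : rk M ∅ = 0 :=
  le_antisymm (by simpa using rk_le_ncard M ∅) (Nat.zero_le _)

lemma indep_rk_eq {M : Matroid α} {I : Set α} (hI : M.Indep I) : rk M I = I.ncard :=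
  le_antisymm (rk_le_ncard M I) (le_rk hI Subset.rfl)

lemma indep_iff_rk {M : Matroid α} {I : Set α} :
    M.Indep I ↔ I ⊆ M.E ∧ rk M I = I.ncard := by
  refine ⟨fun h => ⟨h.subset_ground, indep_rk_eq h⟩, fun ⟨hIE, h⟩ => ?_⟩
  obtain ⟨J, hJI, hJ, hc⟩ := exists_rk_witness M I
  rwa [← Set.eq_of_subset_of_ncard_le hJI (by rw [hc, h]) (toFinite _)]

lemma rk_le_rank (M : Matroid α) {S : Set α} (h : S ⊆ M.E) : rk M S ≤ rank M :=
  rk_mono M h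

lemma base_ncard {M : Matroid α} {B : Set α} (hB : M.IsBase B) : B.ncard = rank M := by
  refine le_antisymm (le_rk hB.indep hB.subset_ground) ?_
  obtain ⟨I, _, hI, hc⟩ := exists_rk_witness M M.E
  obtain ⟨B', hB', hIB'⟩ := hI.exists_isBase_superset
  rw [rank_def, ← hc]
  calc I.ncard ≤ B'.ncard := Set.ncard_le_ncard hIB' (toFinite _)
    _ = B.ncard := hB'.ncard_eq_ncard_of_isBase hB

lemma base_iff_rank {M : Matroid α} {B : Set α} :
    M.IsBase B ↔ M.Indep B ∧ B.ncard = rank M := by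
  refine ⟨fun h => ⟨h.indep, base_ncard h⟩, fun ⟨hI, hc⟩ => ?_⟩
  obtain ⟨B', hB', hBB'⟩ := hI.exists_isBase_superset
  rwa [Set.eq_of_subset_of_ncard_le hBB' (by rw [hc, base_ncard hB']) (toFinite _)]

lemma rank_eq_zero_of_ground_empty {M : Matroid α} (h : M.E = ∅) : rank M = 0 := by
  have := rk_le_ncard M M.E
  rw [rank_def]
  rw [h] at this ⊢
  simpa using this

lemma ground_nonempty_of_rank_pos {M : Matroid α} (h : 1 ≤ rank M) : M.E ≠ ∅ :=
  fun he => by simp [rank_eq_zero_of_ground_empty he] at h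

lemma rk_insert_le (M : Matroid α) (S : Set α) (e : α) :
    rk M (insert e S) ≤ rk M S + 1 := by
  obtain ⟨I, hIS, hI, hc⟩ := exists_rk_witness M (insert e S)
  have h1 : I \ {e} ⊆ S := by
    intro x hx
    rcases hIS hx.1 with rfl | h
    · exact absurd rfl hx.2
    · exact h
  have h3 := le_rk (hI.subset Set.diff_subset) h1
  have h2 : I.ncard ≤ (I \ {e}).ncard + 1 := by
    have := Set.ncard_diff_singleton_add_one (s := I) (a := e)
    rcases em (e ∈ I) with he | he
    · rw [this he]
    · rw [Set.diff_singleton_eq_self he]; omega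
  omega


/-! ### augmentation and bases -/

lemma augment_ncard {M : Matroid α} {I J : Set α} (hI : M.Indep I) (hJ : M.Indep J)
    (h : I.ncard < J.ncard) : ∃ x ∈ J \ I, M.Indep (insert x I) := by
  refine hI.augment hJ ?_
  rw [← (toFinite I).cast_ncard_eq, ← (toFinite J).cast_ncard_eq]
  exact_mod_cast h

lemma basis_ncard {M : Matroid α} {I S : Set α} (hI : M.IsBasis I S) : I.ncard = rk M S := by
  refine le_antisymm (le_rk hI.indep hI.subset) ?_
  by_contra hlt
  push_neg at hlt
  obtain ⟨W, hWS, hW, hc⟩ := exists_rk_witness M S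
  obtain ⟨x, hx, hxI⟩ := augment_ncard hI.indep hW (by omega)
  have := hI.eq_of_subset_indep hxI (subset_insert _ _)
    (insert_subset (hWS hx.1) hI.subset)
  exact hx.2 (this ▸ mem_insert _ _)

lemma mk_basis {M : Matroid α} {I S : Set α} (hIS : I ⊆ S) (hI : M.Indep I)
    (hc : I.ncard = rk M S) (hSE : S ⊆ M.E) : M.IsBasis I S := by
  refine ⟨⟨⟨hI, hIS⟩, fun J hJ hIJ => ?_⟩, hSE⟩
  have : I = J := Set.eq_of_subset_of_ncard_le hIJ (by rw [hc]; exact le_rk hJ.1 hJ.2) (toFinite _)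
  exact this.ge

/-! ### flats via rank -/

lemma flat_insert_rk {M : Matroid α} {F : Set α} (hF : M.IsFlat F) {e : α}
    (he : e ∈ M.E \ F) : rk M (insert e F) = rk M F + 1 := by
  obtain ⟨I, hIF, hI, hc⟩ := exists_rk_witness M F
  have hBF : M.IsBasis I F := mk_basis hIF hI hc hF.subset_ground
  have hub := rk_insert_le M F e
  have hlb := rk_mono M (subset_insert e F)
  rcases Nat.lt_or_ge (rk M F) (rk M (insert e F)) with hgt | hle
  · omega
  · exfalso
    have hBins : M.IsBasis I (insert e F) :=
      mk_basis (hIF.trans (subset_insert _ _)) hI (by omega)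
        (insert_subset he.1 hF.subset_ground)
    exact he.2 (hF.subset_of_isBasis_of_isBasis hBF hBins (mem_insert _ _))

lemma flat_of_insert_rk {M : Matroid α} {F : Set α} (hFE : F ⊆ M.E)
    (h : ∀ e ∈ M.E \ F, rk M F < rk M (insert e F)) : M.IsFlat F := by
  refine ⟨fun I X hIF hIX => fun e heX => ?_, hFE⟩
  by_contra heF
  have heE : e ∈ M.E := hIX.subset_ground heX
  have hrk : rk M F + 1 ≤ rk M (insert e F) := h e ⟨heE, heF⟩
  obtain ⟨J, hJS, hJ, hc⟩ := exists_rk_witness M (insert e F)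
  have hIcard : I.ncard = rk M F := basis_ncard hIF
  obtain ⟨x, hx, hxI⟩ := augment_ncard hIF.indep hJ (by omega)
  have hxF : x ∉ F := by
    intro hxF
    have := hIF.eq_of_subset_indep hxI (subset_insert _ _) (insert_subset hxF hIF.subset)
    exact hx.2 (this ▸ mem_insert _ _)
  have hxe : x = e := by
    rcases hJS hx.1 with h' | h'
    · exact h'
    · exact absurd h' hxF
  subst hxe
  have := hIX.eq_of_subset_indep hxI (subset_insert _ _) (insert_subset heX hIX.subset)
  exact hx.2 (this ▸ mem_insert _ _)

lemma flat_eq_ground_of_rank_le {M : Matroid α} {F : Set α} (hF : M.IsFlat F)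
    (h : rank M ≤ rk M F) : F = M.E := by
  by_contra hne
  obtain ⟨e, he⟩ := (Set.sdiff_nonempty.2 (fun hsub : M.E ⊆ F =>
    hne (hF.subset_ground.antisymm hsub)))
  have := flat_insert_rk hF he
  have h2 := rk_le_rank M (insert_subset he.1 hF.subset_ground)
  omega

lemma rk_zero_iff {M : Matroid α} {S : Set α} (hS : S ⊆ M.E) :
    rk M S = 0 ↔ ∀ e ∈ S, rk M {e} = 0 := by
  constructor
  · intro h e he
    have := rk_mono M (singleton_subset_iff.2 he)
    omega
  · intro h
    by_contra hne
    obtain ⟨I, hIS, hI, hc⟩ := exists_rk_witness M S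
    have : I.Nonempty := by
      rw [Set.nonempty_iff_ne_empty]
      intro h0; rw [h0] at hc; simp at hc; omega
    obtain ⟨e, he⟩ := this
    have h1 : rk M {e} = 1 := by
      rw [indep_rk_eq (hI.subset (singleton_subset_iff.2 he))]; simp
    rw [h e (hIS he)] at h1
    omega

/-! ### dual, restrict, contract ranks -/

lemma dual_rk {M : Matroid α} {X : Set α} (hX : X ⊆ M.E) :
    rk M✶ X + rank M = X.ncard + rk M (M.E \ X) := by
  refine le_antisymm ?_ ?_
  · obtain ⟨D, hDX, hD, hc⟩ := exists_rk_witness M✶ X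
    obtain ⟨hDE, B, hB, hdisj⟩ := dual_indep_iff_exists'.1 hD
    have hsplit : (B ∩ X).ncard + (B \ X).ncard = B.ncard :=
      Set.ncard_inter_add_ncard_diff_eq_ncard B X (toFinite _)
    have h1 : (B \ X).ncard ≤ rk M (M.E \ X) :=
      le_rk (hB.indep.subset Set.diff_subset) (diff_subset_diff_left hB.subset_ground)
    have h2 : D.ncard + (B ∩ X).ncard ≤ X.ncard := by
      rw [← Set.ncard_union_eq (disjoint_of_subset_right inter_subset_left hdisj)
        (toFinite _) (toFinite _)]
      exact Set.ncard_le_ncard (union_subset hDX inter_subset_right) (toFinite _)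
    have h3 := base_ncard hB
    omega
  · obtain ⟨J, hJX, hJ, hc⟩ := exists_rk_witness M (M.E \ X)
    obtain ⟨B₁, hB₁, hJB₁⟩ := hJ.exists_isBase_superset
    have hJ' : B₁ ∩ (M.E \ X) = J := by
      refine (Set.eq_of_subset_of_ncard_le (subset_inter hJB₁ hJX) ?_ (toFinite _)).symm
      rw [hc]
      exact le_rk (hB₁.indep.inter_right _) inter_subset_right
    have hD : M✶.Indep (X \ B₁) :=
      dual_indep_iff_exists'.2 ⟨Set.diff_subset.trans hX, B₁, hB₁, disjoint_sdiff_left⟩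
    have h1 : (X \ B₁).ncard ≤ rk M✶ X := le_rk hD Set.diff_subset
    have h2 : (X ∩ B₁).ncard + (X \ B₁).ncard = X.ncard :=
      Set.ncard_inter_add_ncard_diff_eq_ncard X B₁ (toFinite _)
    have h3 : (B₁ ∩ X).ncard + (B₁ \ X).ncard = B₁.ncard :=
      Set.ncard_inter_add_ncard_diff_eq_ncard B₁ X (toFinite _)
    have h4 : B₁ \ X = J := by
      rw [← hJ']
      ext x
      simp only [mem_diff, mem_inter_iff]
      exact ⟨fun ⟨h5, h6⟩ => ⟨h5, hB₁.subset_ground h5, h6⟩, fun ⟨h5, _, h7⟩ => ⟨h5, h7⟩⟩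
    have h5 : (X ∩ B₁).ncard = (B₁ ∩ X).ncard := by rw [inter_comm]
    have h6 := base_ncard hB₁
    have h7 : (B₁ \ X).ncard = rk M (M.E \ X) := by rw [h4, hc]
    omega

lemma restrict_rk {M : Matroid α} {R X : Set α} (hXR : X ⊆ R) :
    rk (M ↾ R) X = rk M X := by
  unfold rk
  congr 1
  ext n
  constructor
  · rintro ⟨I, h1, h2, h3⟩
    exact ⟨I, h1, (restrict_indep_iff.1 h2).1, h3⟩
  · rintro ⟨I, h1, h2, h3⟩
    exact ⟨I, h1, restrict_indep_iff.2 ⟨h2, h1.trans hXR⟩, h3⟩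

@[simp] lemma contract_ground (M : Matroid α) (C : Set α) : (M ⧸ C).E = M.E \ C := rfl

lemma contract_empty (M : Matroid α) : (M ⧸ (∅ : Set α)) = M := by
  show (M✶ ↾ (M.E \ ∅))✶ = M
  rw [diff_empty, ← dual_ground, restrict_ground_eq_self, dual_dual]

lemma contract_rk {M : Matroid α} {C X : Set α} (hC : C ⊆ M.E) (hX : X ⊆ M.E \ C) :
    rk (M ⧸ C) X + rk M C = rk M (X ∪ C) := by
  set N := M✶ ↾ (M.E \ C) with hN
  have hNE : N.E = M.E \ C := rfl
  have e1 : rk N✶ X + rank N = X.ncard + rk N (N.E \ X) := dual_rk (by rw [hNE]; exact hX)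
  have e2 : rk N (N.E \ X) = rk M✶ ((M.E \ C) \ X) := by
    rw [hNE]; exact restrict_rk Set.diff_subset
  have e3 : rk M✶ ((M.E \ C) \ X) + rank M
      = ((M.E \ C) \ X).ncard + rk M (M.E \ ((M.E \ C) \ X)) :=
    dual_rk (Set.diff_subset.trans Set.diff_subset)
  have hset1 : M.E \ ((M.E \ C) \ X) = X ∪ C := by
    ext x
    simp only [mem_diff, mem_union]
    constructor
    · rintro ⟨hxE, hx⟩
      by_contra hcon
      push_neg at hcon
      exact hx ⟨⟨hxE, fun h => hcon.2 h⟩, hcon.1⟩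
    · rintro (hx | hx)
      · exact ⟨(hX hx).1, fun h => h.2 hx⟩
      · exact ⟨hC hx, fun h => h.1.2 hx⟩
  have e4 : rank N = rk M✶ (M.E \ C) := by
    rw [rank_def, hNE]; exact restrict_rk Subset.rfl
  have e5 : rk M✶ (M.E \ C) + rank M = (M.E \ C).ncard + rk M (M.E \ (M.E \ C)) :=
    dual_rk Set.diff_subset
  have hset2 : M.E \ (M.E \ C) = C := Set.diff_diff_cancel_left hC
  have hcard : ((M.E \ C) \ X).ncard + X.ncard = (M.E \ C).ncard :=
    Set.ncard_diff_add_ncard_of_subset hX (toFinite _)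
  rw [hset1] at e3
  rw [hset2] at e5
  show rk N✶ X + rk M C = rk M (X ∪ C)
  omega

lemma contract_rank {M : Matroid α} {C : Set α} (hC : C ⊆ M.E) :
    rank (M ⧸ C) + rk M C = rank M := by
  have h := contract_rk hC (Subset.rfl : M.E \ C ⊆ M.E \ C)
  rw [Set.diff_union_of_subset hC] at h
  show rk (M ⧸ C) (M ⧸ C).E + rk M C = rk M M.E
  rw [contract_ground]
  exact h

lemma contract_indep_iff {M : Matroid α} {C I : Set α} (hC : C ⊆ M.E) :
    (M ⧸ C).Indep I ↔ I ⊆ M.E \ C ∧ rk M (I ∪ C) = I.ncard + rk M C := by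
  rw [indep_iff_rk, contract_ground]
  constructor
  · rintro ⟨h1, h2⟩
    have := contract_rk hC h1
    exact ⟨h1, by omega⟩
  · rintro ⟨h1, h2⟩
    have := contract_rk hC h1
    exact ⟨h1, by omega⟩

lemma contract_base_iff {M : Matroid α} {C B : Set α} (hC : C ⊆ M.E) :
    (M ⧸ C).IsBase B ↔ B ⊆ M.E \ C ∧ rk M (B ∪ C) = B.ncard + rk M C
      ∧ B.ncard + rk M C = rank M := by
  rw [base_iff_rank, contract_indep_iff hC]
  have := contract_rank hC
  constructor
  · rintro ⟨⟨h1, h2⟩, h3⟩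
    exact ⟨h1, h2, by omega⟩
  · rintro ⟨h1, h2, h3⟩
    exact ⟨⟨h1, h2⟩, by omega⟩


/-! ### relaxation setup -/

structure Rel (M Mt : Matroid α) (H : Set α) (k h : ℕ) : Prop where
  hk : 1 ≤ k
  hkh : k ≤ h
  hrank : rank M = k
  hst : Stressed M H
  hcard : H.ncard = h
  hrel : IsRelaxation M Mt H

namespace Rel

variable {M Mt : Matroid α} {H : Set α} {k h : ℕ} (R : Rel M Mt H k h)

include R

lemma hHE : H ⊆ M.E := R.hst.1.1.subset_ground

lemma hkH : k ≤ H.ncard := by rw [R.hcard]; exact R.hkh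

lemma groundt : Mt.E = M.E := R.hrel.1

/-- circuits: k-subsets of H -/
lemma circuit_of_subset {C : Set α} (hCH : C ⊆ H) (hc : C.ncard = k) : IsCircuit M C :=
  R.hst.2 C hCH (by rw [R.hrank]; exact hc)

/-- small subsets of H are independent -/
lemma indep_of_subset_H {I : Set α} (hIH : I ⊆ H) (hc : I.ncard + 1 ≤ k) : M.Indep I := by
  obtain ⟨J, hIJ, hJH, hJc⟩ := Set.exists_subsuperset_card_eq hIH (by omega) R.hkH
  have hcirc := R.circuit_of_subset hJH hJc
  refine hcirc.2 I ?_
  refine ssubset_iff_subset_ne.2 ⟨hIJ, ?_⟩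
  intro hIJ'
  rw [hIJ'] at hc
  omega

/-- subsets of H of size ≥ k are dependent -/
lemma dep_of_subset_H {S : Set α} (hSH : S ⊆ H) (hc : k ≤ S.ncard) {I : Set α}
    (hIS : I ⊆ S) (hI : M.Indep I) : I.ncard + 1 ≤ k := by
  by_contra hle
  push_neg at hle
  obtain ⟨C, hCI, hCc⟩ := Set.exists_subset_card_eq (show k ≤ I.ncard by omega)
  have hcirc := R.circuit_of_subset (hCI.trans (hIS.trans hSH)) hCc
  exact hcirc.1.1 (hI.subset hCI)

lemma rk_subset_H_small {S : Set α} (hSH : S ⊆ H) (hc : S.ncard + 1 ≤ k) :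
    rk M S = S.ncard := indep_rk_eq (R.indep_of_subset_H hSH hc)

lemma rk_subset_H_big {S : Set α} (hSH : S ⊆ H) (hc : k ≤ S.ncard) :
    rk M S + 1 = k := by
  have hle : rk M S + 1 ≤ k := by
    obtain ⟨I, hIS, hI, hrk⟩ := exists_rk_witness M S
    rw [← hrk]
    exact R.dep_of_subset_H hSH hc hIS hI
  have hge : k - 1 ≤ rk M S := by
    obtain ⟨I, hIS, hIc⟩ := Set.exists_subset_card_eq (show k - 1 ≤ S.ncard by omega)
    have hind := R.indep_of_subset_H (hIS.trans hSH) (by omega)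
    have := le_rk hind hIS
    omega
  omega

lemma rk_H : rk M H + 1 = k := R.rk_subset_H_big Subset.rfl R.hkH

lemma rk_insert_H {e : α} (he : e ∈ M.E \ H) : rk M (insert e H) = k := by
  have := flat_insert_rk R.hst.1.1 he
  have := R.rk_H
  omega

/-- extension of a (k-1)-element independent subset of H by an element outside H is a base -/
lemma base_ext {I : Set α} (hIH : I ⊆ H) (hc : I.ncard + 1 = k) {e : α}
    (he : e ∈ M.E \ H) : M.IsBase (insert e I) := by
  have hI : M.Indep I := R.indep_of_subset_H hIH (by omega)
  obtain ⟨J, hJS, hJ, hJc⟩ := exists_rk_witness M (insert e H)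
  rw [R.rk_insert_H he] at hJc
  obtain ⟨x, hx, hxI⟩ := augment_ncard hI hJ (by omega)
  have hxe : x = e := by
    rcases hJS hx.1 with h' | h'
    · exact h'
    · exfalso
      have hd := R.dep_of_subset_H (Subset.rfl : H ⊆ H) R.hkH
        (insert_subset h' hIH) hxI
      rw [Set.ncard_insert_of_notMem hx.2 (toFinite _)] at hd
      omega
  subst hxe
  have heI : x ∉ I := fun hxi => he.2 (hIH hxi)
  refine base_iff_rank.2 ⟨hxI, ?_⟩
  rw [Set.ncard_insert_of_notMem heI (toFinite _), R.hrank]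
  omega

lemma ground_ne : M.E ≠ ∅ := ground_nonempty_of_rank_pos (by rw [R.hrank]; exact R.hk)

lemma compl_H_nonempty : (M.E \ H).Nonempty := by
  rw [Set.diff_nonempty]
  intro hsub
  exact R.hst.1.2.1 (R.hHE.antisymm hsub)

lemma base_of_M {B : Set α} (hB : M.IsBase B) : Mt.IsBase B := (R.hrel.2 B).2 (Or.inl hB)

lemma base_of_subset_H {B : Set α} (hBH : B ⊆ H) (hc : B.ncard = k) : Mt.IsBase B :=
  (R.hrel.2 B).2 (Or.inr ⟨hBH, by rw [R.hrank]; exact hc⟩)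

lemma rank_t : rank Mt = k := by
  obtain ⟨B, hB⟩ := M.exists_isBase
  rw [← base_ncard (R.base_of_M hB), base_ncard hB, R.hrank]

lemma indep_t_iff {I : Set α} : Mt.Indep I ↔ M.Indep I ∨ (I ⊆ H ∧ I.ncard ≤ k) := by
  constructor
  · intro hI
    obtain ⟨B, hB, hIB⟩ := hI.exists_isBase_superset
    rcases (R.hrel.2 B).1 hB with hMB | ⟨hBH, hBc⟩
    · exact Or.inl (hMB.indep.subset hIB)
    · refine Or.inr ⟨hIB.trans hBH, ?_⟩
      rw [← R.hrank, ← hBc]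
      exact Set.ncard_le_ncard hIB (toFinite _)
  · rintro (hI | ⟨hIH, hIc⟩)
    · obtain ⟨B, hB, hIB⟩ := hI.exists_isBase_superset
      exact Matroid.indep_iff.2 ⟨B, R.base_of_M hB, hIB⟩
    · obtain ⟨J, hIJ, hJH, hJc⟩ := Set.exists_subsuperset_card_eq hIH hIc R.hkH
      exact Matroid.indep_iff.2 ⟨J, R.base_of_subset_H hJH hJc, hIJ⟩

lemma rk_t_eq {S : Set α} (hSE : S ⊆ M.E) (hSH : ¬S ⊆ H) : rk Mt S = rk M S := by
  refine le_antisymm ?_ ?_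
  · obtain ⟨I, hIS, hI, hc⟩ := exists_rk_witness Mt S
    rw [← hc]
    rcases R.indep_t_iff.1 hI with hMI | ⟨hIH, hIc⟩
    · exact le_rk hMI hIS
    · rcases Nat.lt_or_ge I.ncard k with hlt | hge
      · exact le_rk (R.indep_of_subset_H hIH (by omega)) hIS
      · have hIk : I.ncard = k := le_antisymm hIc hge
        obtain ⟨e, heS, heH⟩ := not_subset.1 hSH
        have hk1 := R.hk
        obtain ⟨b, hb⟩ : I.Nonempty := Set.nonempty_of_ncard_ne_zero (by omega)
        have hbase : M.IsBase (insert e (I \ {b})) := R.base_ext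
          ((Set.diff_subset).trans hIH)
          (by rw [Set.ncard_diff_singleton_add_one hb (toFinite _)]; exact hIk)
          ⟨hSE heS, heH⟩
        have hsub : insert e (I \ {b}) ⊆ S :=
          insert_subset heS ((Set.diff_subset).trans hIS)
        have := le_rk hbase.indep hsub
        have hcard : (insert e (I \ {b})).ncard = k := by
          rw [← R.hrank, ← base_ncard hbase]
        omega
  · obtain ⟨I, hIS, hI, hc⟩ := exists_rk_witness M S
    rw [← hc]
    exact le_rk (R.indep_t_iff.2 (Or.inl hI)) hIS

lemma rk_t_small {S : Set α} (hSH : S ⊆ H) (hc : S.ncard + 1 ≤ k) :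
    rk Mt S = S.ncard :=
  indep_rk_eq (R.indep_t_iff.2 (Or.inr ⟨hSH, by omega⟩))

lemma rk_t_big {S : Set α} (hSH : S ⊆ H) (hc : k ≤ S.ncard) : rk Mt S = k := by
  refine le_antisymm ?_ ?_
  · rw [← R.rank_t]
    exact rk_le_rank Mt (by rw [R.groundt]; exact hSH.trans R.hHE)
  · obtain ⟨I, hIS, hIc⟩ := Set.exists_subset_card_eq hc
    have := le_rk (R.indep_t_iff.2 (Or.inr ⟨hIS.trans hSH, hIc.le⟩)) hIS
    omega

/-- Lemma A : contraction by a set not inside H is unchanged by relaxation -/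
lemma contract_eq {S : Set α} (hSE : S ⊆ M.E) (hSH : ¬S ⊆ H) :
    (Mt ⧸ S) = (M ⧸ S) := by
  show (Mt✶ ↾ (Mt.E \ S))✶ = (M✶ ↾ (M.E \ S))✶
  rw [R.groundt]
  congr 1
  refine Matroid.ext_indep (by simp) ?_
  intro I hIE
  rw [restrict_ground_eq] at hIE
  simp only [Matroid.restrict_indep_iff, Matroid.dual_indep_iff_exists']
  constructor
  · rintro ⟨⟨hIEt, B, hB, hdisj⟩, hIsub⟩
    refine ⟨⟨by rwa [R.groundt] at hIEt, ?_⟩, hIsub⟩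
    rcases (R.hrel.2 B).1 hB with hMB | ⟨hBH, hBc⟩
    · exact ⟨B, hMB, hdisj⟩
    · obtain ⟨e, heS, heH⟩ := not_subset.1 hSH
      have hBk : B.ncard = k := by rw [hBc, R.hrank]
      have hk1 := R.hk
      obtain ⟨b, hb⟩ : B.Nonempty := Set.nonempty_of_ncard_ne_zero (by omega)
      have hbase : M.IsBase (insert e (B \ {b})) := R.base_ext
        ((Set.diff_subset).trans hBH)
        (by rw [Set.ncard_diff_singleton_add_one hb (toFinite _)]; exact hBk)
        ⟨hSE heS, heH⟩
      refine ⟨_, hbase, Set.disjoint_left.2 ?_⟩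
      rintro x hxI hx
      rcases hx with rfl | hx
      · exact (hIE hxI).2 heS
      · exact (Set.disjoint_left.1 hdisj hxI) hx.1
  · rintro ⟨⟨hIEt, B, hB, hdisj⟩, hIsub⟩
    exact ⟨⟨by rwa [R.groundt], B, R.base_of_M hB, hdisj⟩, hIsub⟩


/-! ### Lemma B : contraction of a small subset of H -/

section SmallContract

variable {S : Set α} (hSH : S ⊆ H) (hjk : S.ncard + 1 ≤ k)

lemma hSE (hSH : S ⊆ H) : S ⊆ M.E := hSH.trans R.hHE

lemma hSEt (hSH : S ⊆ H) : S ⊆ Mt.E := by rw [R.groundt]; exact R.hSE hSH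

include hSH hjk

lemma rk_S_small : rk M S = S.ncard := R.rk_subset_H_small hSH (by omega)

lemma contract_rank_small : rank (M ⧸ S) + S.ncard = k := by
  have h1 := contract_rank (R.hSE hSH)
  rw [R.rk_S_small hSH hjk, R.hrank] at h1
  exact h1

lemma contract_rank_t_small : rank (Mt ⧸ S) + S.ncard = k := by
  have h1 := contract_rank (R.hSEt hSH)
  rw [R.rk_t_small hSH hjk, R.rank_t] at h1
  exact h1

lemma contract_rk_compute {X : Set α} (hX : X ⊆ M.E \ S) :
    rk (M ⧸ S) X + S.ncard = rk M (X ∪ S) := by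
  have h1 := contract_rk (R.hSE hSH) hX
  rw [R.rk_S_small hSH hjk] at h1
  exact h1

lemma flat_contract : (M ⧸ S).IsFlat (H \ S) := by
  have hgr : (M ⧸ S).E = M.E \ S := contract_ground M S
  refine flat_of_insert_rk ?_ ?_
  · rw [hgr]; exact diff_subset_diff_left R.hHE
  · intro e he
    rw [hgr] at he
    have heH : e ∉ H := by
      intro heH
      exact he.2 ⟨heH, he.1.2⟩
    have hins : insert e (H \ S) ∪ S = insert e H := by
      rw [Set.insert_union, Set.diff_union_of_subset hSH]
    have h1 := R.contract_rk_compute hSH hjk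
      (show H \ S ⊆ M.E \ S from diff_subset_diff_left R.hHE)
    have h2 := R.contract_rk_compute hSH hjk
      (show insert e (H \ S) ⊆ M.E \ S from insert_subset he.1 (diff_subset_diff_left R.hHE))
    rw [Set.diff_union_of_subset hSH] at h1
    rw [hins] at h2
    have h3 := R.rk_H
    have h4 := R.rk_insert_H ⟨he.1.1, heH⟩
    omega

lemma hyperplane_contract : IsHyperplane (M ⧸ S) (H \ S) := by
  obtain ⟨eo, heo⟩ := R.compl_H_nonempty
  have heogr : eo ∈ (M ⧸ S).E := ⟨heo.1, fun heS => heo.2 (hSH heS)⟩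
  refine ⟨R.flat_contract hSH hjk, ?_, ?_⟩
  · intro heq
    have : eo ∈ H \ S := by rw [heq]; exact heogr
    exact heo.2 this.1
  · intro F hF hssub
    obtain ⟨e, heF, heHS⟩ := exists_of_ssubset hssub
    have heE : e ∈ (M ⧸ S).E := hF.subset_ground heF
    have heH : e ∉ H := fun heH => heHS ⟨heH, heE.2⟩
    have hsub : insert e (H \ S) ⊆ F := insert_subset heF hssub.subset
    have h2 := R.contract_rk_compute hSH hjk
      (show insert e (H \ S) ⊆ M.E \ S from insert_subset heE (diff_subset_diff_left R.hHE))
    rw [show insert e (H \ S) ∪ S = insert e H by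
      rw [Set.insert_union, Set.diff_union_of_subset hSH]] at h2
    have h4 := R.rk_insert_H ⟨heE.1, heH⟩
    have h5 := rk_mono (M ⧸ S) hsub
    have h6 := R.contract_rank_small hSH hjk
    exact flat_eq_ground_of_rank_le hF (by omega)

lemma stressed_contract : Stressed (M ⧸ S) (H \ S) := by
  refine ⟨R.hyperplane_contract hSH hjk, ?_⟩
  intro C hCH hCc
  have hCES : C ⊆ M.E \ S := hCH.trans (diff_subset_diff_left R.hHE)
  have hdisj : Disjoint C S := disjoint_of_subset_left hCH disjoint_sdiff_left
  have hCU : (C ∪ S).ncard = C.ncard + S.ncard :=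
    Set.ncard_union_eq hdisj (toFinite _) (toFinite _)
  have hrkMS : rank (M ⧸ S) + S.ncard = k := R.contract_rank_small hSH hjk
  have hCck : C.ncard + S.ncard = k := by omega
  have hCHsub : C ∪ S ⊆ H := union_subset (hCH.trans Set.diff_subset) hSH
  constructor
  · constructor
    · intro hind
      rw [contract_indep_iff (R.hSE hSH)] at hind
      have hbig := R.rk_subset_H_big hCHsub (by omega)
      rw [R.rk_S_small hSH hjk] at hind
      omega
    · exact hCES
  · intro D hD
    have hDC : D ⊆ C := hD.subset
    have hDlt : D.ncard < C.ncard := Set.ncard_lt_ncard hD (toFinite _)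
    rw [contract_indep_iff (R.hSE hSH), R.rk_S_small hSH hjk]
    have hDU : (D ∪ S).ncard = D.ncard + S.ncard :=
      Set.ncard_union_eq (disjoint_of_subset_left hDC hdisj) (toFinite _) (toFinite _)
    have hind : M.Indep (D ∪ S) := R.indep_of_subset_H
      ((union_subset_union_left S hDC).trans hCHsub) (by omega)
    refine ⟨hDC.trans hCES, ?_⟩
    rw [indep_rk_eq hind, hDU]

lemma relaxation_contract : IsRelaxation (M ⧸ S) (Mt ⧸ S) (H \ S) := by
  have hrkS : rk M S = S.ncard := R.rk_S_small hSH hjk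
  have hrkSt : rk Mt S = S.ncard := R.rk_t_small hSH (by omega)
  have hrk1 := R.contract_rank_small hSH hjk
  constructor
  · show Mt.E \ S = M.E \ S
    rw [R.groundt]
  intro B
  rw [contract_base_iff (R.hSEt hSH), contract_base_iff (R.hSE hSH),
    hrkS, hrkSt, R.rank_t, R.hrank, R.groundt]
  constructor
  · rintro ⟨hBE, hrkB, hcard⟩
    have hdisj : Disjoint B S := disjoint_of_subset_left hBE disjoint_sdiff_left
    have hBU : (B ∪ S).ncard = B.ncard + S.ncard :=
      Set.ncard_union_eq hdisj (toFinite _) (toFinite _)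
    have hBUE : B ∪ S ⊆ Mt.E := by
      rw [R.groundt]
      exact union_subset (hBE.trans Set.diff_subset) (R.hSE hSH)
    have hind : Mt.Indep (B ∪ S) := indep_iff_rk.2 ⟨hBUE, by rw [hrkB, hBU]⟩
    have hbase : Mt.IsBase (B ∪ S) := base_iff_rank.2 ⟨hind, by rw [hBU, R.rank_t]; omega⟩
    rcases (R.hrel.2 _).1 hbase with hMB | ⟨hBH, hBc⟩
    · refine Or.inl ⟨hBE, ?_, hcard⟩
      rw [indep_rk_eq hMB.indep, hBU]
    · refine Or.inr ⟨fun x hx => ⟨hBH (mem_union_left S hx),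
        (Set.disjoint_left.1 hdisj hx)⟩, ?_⟩
      omega
  · rintro (⟨hBE, hrkB, hcard⟩ | ⟨hBHS, hcard⟩)
    · have hdisj : Disjoint B S := disjoint_of_subset_left hBE disjoint_sdiff_left
      have hBU : (B ∪ S).ncard = B.ncard + S.ncard :=
        Set.ncard_union_eq hdisj (toFinite _) (toFinite _)
      have hBUE : B ∪ S ⊆ M.E := union_subset (hBE.trans Set.diff_subset) (R.hSE hSH)
      have hind : M.Indep (B ∪ S) := indep_iff_rk.2 ⟨hBUE, by rw [hrkB, hBU]⟩
      have hbase : M.IsBase (B ∪ S) := base_iff_rank.2 ⟨hind, by rw [hBU, R.hrank]; omega⟩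
      have hbaset : Mt.IsBase (B ∪ S) := R.base_of_M hbase
      refine ⟨hBE, ?_, hcard⟩
      rw [indep_rk_eq hbaset.indep, hBU]
    · have hBE : B ⊆ M.E \ S := hBHS.trans (diff_subset_diff_left R.hHE)
      have hdisj : Disjoint B S := disjoint_of_subset_left hBHS disjoint_sdiff_left
      have hBU : (B ∪ S).ncard = B.ncard + S.ncard :=
        Set.ncard_union_eq hdisj (toFinite _) (toFinite _)
      have hbaset : Mt.IsBase (B ∪ S) := R.base_of_subset_H
        (union_subset (hBHS.trans Set.diff_subset) hSH) (by rw [hBU]; omega)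
      refine ⟨hBE, ?_, by omega⟩
      rw [indep_rk_eq hbaset.indep, hBU]

end SmallContract

/-! ### Lemma C : contraction of a big subset of H -/

section BigContract

variable {S : Set α} (hSH : S ⊆ H) (hks : k ≤ S.ncard)

include hSH hks

lemma contract_rank_t_zero : rank (Mt ⧸ S) = 0 := by
  have h1 := contract_rank (R.hSEt hSH)
  rw [R.rk_t_big hSH hks, R.rank_t] at h1
  omega

lemma contract_rank_one : rank (M ⧸ S) = 1 := by
  have h1 := contract_rank (R.hSE hSH)
  have h2 := R.rk_subset_H_big hSH hks
  rw [R.hrank] at h1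
  omega

omit hks in
lemma contract_ground_ne : (M ⧸ S).E ≠ ∅ := by
  obtain ⟨e, he⟩ := R.compl_H_nonempty
  exact fun h0 => (h0 ▸ (⟨he.1, fun heS => he.2 (hSH heS)⟩ : e ∈ (M ⧸ S).E) : e ∈ (∅ : Set α))

omit hks in
lemma contract_ground_t_ne : (Mt ⧸ S).E ≠ ∅ := by
  have : (Mt ⧸ S).E = (M ⧸ S).E := by show Mt.E \ S = M.E \ S; rw [R.groundt]
  rw [this]; exact R.contract_ground_ne hSH

lemma loop_contract (hne : S ≠ H) : ∃ e ∈ (M ⧸ S).E, rk (M ⧸ S) {e} = 0 := by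
  obtain ⟨e, he⟩ := exists_of_ssubset (ssubset_iff_subset_ne.2 ⟨hSH, hne⟩)
  have heE : e ∈ (M ⧸ S).E := ⟨R.hHE he.1, he.2⟩
  refine ⟨e, heE, ?_⟩
  have h1 := contract_rk (R.hSE hSH) (singleton_subset_iff.2 heE)
  have h2 := R.rk_subset_H_big hSH hks
  have h3 := R.rk_subset_H_big (show {e} ∪ S ⊆ H from union_subset (by simpa using he.1) hSH)
    (le_trans hks (Set.ncard_le_ncard subset_union_right (toFinite _)))
  omega

omit hSH hks in
lemma noloop_contract_H : ∀ e ∈ (M ⧸ H).E, rk (M ⧸ H) {e} = 1 := by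
  intro e he
  have h1 := contract_rk R.hHE (singleton_subset_iff.2 he)
  rw [Set.singleton_union, R.rk_insert_H he] at h1
  have h2 := R.rk_H
  omega

end BigContract

end Rel



variable {P Z : Matroid α → Polynomial ℤ}

lemma P_rank_zero (ax : PZaxioms P Z) {N : Matroid α} (hE : N.E ≠ ∅) (h0 : rank N = 0) :
    P N = 0 := by
  rcases ax.2.1 N hE with hP | hP
  · exact hP
  · rw [h0] at hP; omega

lemma P_coeff_one_eq_zero (ax : PZaxioms P Z) {N : Matroid α} (hE : N.E ≠ ∅)
    (h1 : rank N = 1) : (P N).coeff 1 = 0 := by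
  rcases ax.2.1 N hE with hP | hP
  · rw [hP]; simp
  · rw [h1] at hP
    exact Polynomial.coeff_eq_zero_of_natDegree_lt (by omega)

lemma P_eq_C_coeff_zero (ax : PZaxioms P Z) {N : Matroid α} (hE : N.E ≠ ∅)
    (h1 : rank N = 1) : P N = Polynomial.C ((P N).coeff 0) := by
  rcases ax.2.1 N hE with hP | hP
  · rw [hP]; simp
  · rw [h1] at hP
    have hd : (P N).natDegree = 0 := by omega
    conv_lhs => rw [Polynomial.eq_C_of_natDegree_eq_zero hd]

/-- loop set -/
def loopset (N : Matroid α) : Set α := {e ∈ N.E | rk N {e} = 0}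

lemma loopset_subset (N : Matroid α) : loopset N ⊆ N.E := fun _ he => he.1

lemma rk_eq_zero_iff_subset_loopset {N : Matroid α} {S : Set α} (hSE : S ⊆ N.E) :
    rk N S = 0 ↔ S ⊆ loopset N := by
  rw [rk_zero_iff hSE]
  exact ⟨fun h e he => ⟨hSE he, h e he⟩, fun h e he => (h he).2⟩

lemma rank_one_contract_facts {N : Matroid α} (hr : rank N = 1) {S : Set α}
    (hSE : S ⊆ N.E) (h0 : rk N S = 0) :
    rank (N ⧸ S) = 1 ∧ loopset (N ⧸ S) = loopset N \ S := by
  have hcr := contract_rank hSE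
  rw [h0, hr] at hcr
  refine ⟨by omega, ?_⟩
  ext e
  simp only [loopset, mem_setOf_eq, contract_ground, mem_diff]
  constructor
  · rintro ⟨⟨heE, heS⟩, hrk⟩
    have hck := contract_rk hSE (singleton_subset_iff.2 ⟨heE, heS⟩)
    rw [hrk, h0] at hck
    have : rk N {e} = 0 := by
      have := rk_mono N (show {e} ⊆ {e} ∪ S from subset_union_left)
      omega
    exact ⟨⟨heE, this⟩, heS⟩
  · rintro ⟨⟨heE, hrk⟩, heS⟩
    refine ⟨⟨heE, heS⟩, ?_⟩
    have hck := contract_rk hSE (singleton_subset_iff.2 ⟨heE, heS⟩)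
    have hU0 : rk N ({e} ∪ S) = 0 := by
      rw [rk_eq_zero_iff_subset_loopset (union_subset (by simpa using heE) hSE)]
      refine union_subset (singleton_subset_iff.2 (⟨heE, hrk⟩ : e ∈ loopset N)) ?_
      exact (rk_eq_zero_iff_subset_loopset hSE).1 h0
    rw [hU0, h0] at hck
    omega

lemma P_rank_one_aux (ax : PZaxioms P Z) :
    ∀ m : ℕ, ∀ N : Matroid α, rank N = 1 → (loopset N).ncard = m →
      P N = (if loopset N = ∅ then 1 else 0) := by
  intro m
  induction m using Nat.strong_induction_on with
  | _ m IH =>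
  intro N hr hm
  classical
  -- the ground set, a non-loop element
  have hE : N.E ≠ ∅ := ground_nonempty_of_rank_pos (by omega)
  obtain ⟨I, hIE, hI, hc⟩ := exists_rk_witness N N.E
  rw [← rank_def, hr] at hc
  obtain ⟨u, hu⟩ := Set.ncard_eq_one.1 hc
  subst hu
  have huE : u ∈ N.E := hIE rfl
  have huL : u ∉ loopset N := by
    intro hu
    have := indep_rk_eq hI
    simp only [Set.ncard_singleton] at this
    rw [hu.2] at this
    omega
  set Efin := N.E.toFinite.toFinset with hEfin
  set Lfin := (loopset N).toFinite.toFinset with hLfin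
  have hLE : Lfin ⊆ Efin := by
    simp only [hLfin, hEfin, Set.Finite.toFinset_subset, Set.Finite.coe_toFinset]
    exact loopset_subset N
  have hcoeE : (Efin : Set α) = N.E := Set.Finite.coe_toFinset _
  have hcoeL : (Lfin : Set α) = loopset N := Set.Finite.coe_toFinset _
  -- rewrite the Z sum
  have hZ := ax.2.2.2 N
  have hsplit := Finset.sum_filter_add_sum_filter_not Efin.powerset (· ⊆ Lfin)
    (fun F => X ^ (rk N (F : Set α)) * P (N ⧸ (F : Set α)))
  -- first sum : over subsets of the loop set
  have hfil : Efin.powerset.filter (· ⊆ Lfin) = Lfin.powerset := by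
    ext F
    simp only [Finset.mem_filter, Finset.mem_powerset]
    exact ⟨fun h => h.2, fun h => ⟨h.trans hLE, h⟩⟩
  have hsum1 : ∀ F ∈ Lfin.powerset,
      X ^ (rk N (F : Set α)) * P (N ⧸ (F : Set α)) = P (N ⧸ (F : Set α)) := by
    intro F hF
    rw [Finset.mem_powerset] at hF
    have hFL : (F : Set α) ⊆ loopset N := by
      rw [← hcoeL]; exact_mod_cast hF
    have : rk N (F : Set α) = 0 :=
      (rk_eq_zero_iff_subset_loopset (hFL.trans (loopset_subset N))).2 hFL
    rw [this, pow_zero, one_mul]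
  -- second sum : subsets not inside the loop set
  have hsum2 : ∀ F ∈ Efin.powerset.filter (¬ · ⊆ Lfin),
      X ^ (rk N (F : Set α)) * P (N ⧸ (F : Set α))
        = (if F = Efin then X else 0) := by
    intro F hF
    rw [Finset.mem_filter, Finset.mem_powerset] at hF
    obtain ⟨hFE, hFL⟩ := hF
    have hFE' : (F : Set α) ⊆ N.E := by rw [← hcoeE]; exact_mod_cast hFE
    obtain ⟨e, heF, heL⟩ := Finset.not_subset.1 hFL
    have heE : e ∈ N.E := hFE' heF
    have heL' : e ∉ loopset N := by rw [← hcoeL]; exact_mod_cast heL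
    have hrke : rk N {e} = 1 := by
      have h1 : rk N {e} ≤ 1 := by simpa using rk_le_ncard N {e}
      have h2 : rk N {e} ≠ 0 := fun h => heL' ⟨heE, h⟩
      omega
    have hrkF : rk N (F : Set α) = 1 := by
      have h1 := rk_mono N (singleton_subset_iff.2 (show e ∈ (F : Set α) by exact_mod_cast heF))
      have h2 := rk_le_rank N hFE'
      omega
    rcases em (F = Efin) with rfl | hne
    · rw [if_pos rfl, hrkF]
      have : (N ⧸ (Efin : Set α)).E = ∅ := by
        rw [contract_ground, hcoeE, diff_self]
      rw [(ax.1 _ this).1, pow_one, mul_one]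
    · rw [if_neg hne, hrkF]
      have hFssE : (F : Set α) ≠ N.E := by
        intro hFeq
        apply hne
        apply Finset.coe_injective
        rw [hFeq, hcoeE]
      have hgne : (N ⧸ (F : Set α)).E ≠ ∅ := by
        rw [contract_ground]
        intro h0
        exact hFssE (le_antisymm hFE' (Set.diff_eq_empty.1 h0))
      have hcrk : rank (N ⧸ (F : Set α)) = 0 := by
        have := contract_rank hFE'
        rw [hrkF, hr] at this
        omega
      rw [P_rank_zero ax hgne hcrk, mul_zero]
  -- facts about contractions by loop subsets
  have hkey : ∀ F ∈ Lfin.powerset, (F : Set α) ⊆ loopset N ∧ (N ⧸ (F : Set α)).E ≠ ∅ ∧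
      rank (N ⧸ (F : Set α)) = 1 ∧ loopset (N ⧸ (F : Set α)) = loopset N \ (F : Set α) := by
    intro F hF
    rw [Finset.mem_powerset] at hF
    have hFL : (F : Set α) ⊆ loopset N := by
      rw [← hcoeL]; exact_mod_cast hF
    have hFE' : (F : Set α) ⊆ N.E := hFL.trans (loopset_subset N)
    have hrk0 : rk N (F : Set α) = 0 := (rk_eq_zero_iff_subset_loopset hFE').2 hFL
    obtain ⟨h1, h2⟩ := rank_one_contract_facts hr hFE' hrk0
    refine ⟨hFL, ?_, h1, h2⟩
    intro h0
    have : u ∈ (N ⧸ (F : Set α)).E := ⟨huE, fun huF => huL (hFL huF)⟩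
    rw [h0] at this
    exact this
  -- the value of P on the contractions, by induction
  have hval : ∀ F ∈ Lfin.powerset, F ≠ ∅ →
      P (N ⧸ (F : Set α)) = (if (F : Set α) = loopset N then 1 else 0) := by
    intro F hF hne
    obtain ⟨hFL, hgne, hrk1, hloopeq⟩ := hkey F hF
    have hcard : (loopset N \ (F : Set α)).ncard + (F : Set α).ncard = m := by
      rw [← hm]
      exact Set.ncard_diff_add_ncard_of_subset hFL (toFinite _)
    have hFpos : 1 ≤ (F : Set α).ncard := by
      rw [Set.ncard_coe_finset]
      exact Finset.card_pos.2 (Finset.nonempty_iff_ne_empty.2 hne)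
    have := IH (loopset N \ (F : Set α)).ncard (by omega) (N ⧸ (F : Set α)) hrk1
      (by rw [hloopeq])
    rw [hloopeq] at this
    rw [this]
    rcases em ((F : Set α) = loopset N) with heq | hne'
    · rw [if_pos heq, if_pos (by rw [heq, diff_self])]
    · rw [if_neg hne', if_neg (fun h0 =>
        hne' (le_antisymm hFL (Set.diff_eq_empty.1 h0)))]
  -- assemble the Z sum
  have hZ2 : Z N = (∑ F ∈ Lfin.powerset, P (N ⧸ (F : Set α))) + X := by
    rw [hZ, ← hsplit, hfil, Finset.sum_congr rfl hsum1, Finset.sum_congr rfl hsum2]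
    congr 1
    rw [Finset.sum_ite_eq' (Efin.powerset.filter (¬ · ⊆ Lfin)) Efin (fun _ => (X : Polynomial ℤ))]
    rw [if_pos]
    rw [Finset.mem_filter, Finset.mem_powerset]
    refine ⟨Subset.rfl, ?_⟩
    intro hsub
    have : u ∈ Lfin := hsub (by rw [hEfin, Set.Finite.mem_toFinset]; exact huE)
    rw [hLfin, Set.Finite.mem_toFinset] at this
    exact huL this
  -- coefficient computation
  have hpal := (ax.2.2.1 N).2 0 (by omega)
  rw [hr] at hpal
  norm_num at hpal
  rw [hZ2] at hpal
  simp only [Polynomial.coeff_add, Polynomial.finset_sum_coeff, Polynomial.coeff_X_zero,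
    Polynomial.coeff_X_one, add_zero] at hpal
  have hcoeff1 : ∀ F ∈ Lfin.powerset, (P (N ⧸ (F : Set α))).coeff 1 = 0 := by
    intro F hF
    obtain ⟨_, hgne, hrk1, _⟩ := hkey F hF
    exact P_coeff_one_eq_zero ax hgne hrk1
  rw [Finset.sum_congr rfl hcoeff1, Finset.sum_const, smul_zero, zero_add] at hpal
  -- hpal : ∑ F ∈ Lfin.powerset, (P (N ⧸ ↑F)).coeff 0 = 1
  rcases Nat.eq_zero_or_pos m with hm0 | hmpos
  · -- no loops
    have hLemp : loopset N = ∅ := by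
      rw [← Set.ncard_eq_zero (toFinite _), hm, hm0]
    have hLfe : Lfin = ∅ := by
      rw [hLfin, Set.Finite.toFinset_eq_empty]; exact hLemp
    rw [hLfe] at hpal
    rw [Finset.powerset_empty, Finset.sum_singleton] at hpal
    rw [show ((∅ : Finset α) : Set α) = (∅ : Set α) from Finset.coe_empty,
      contract_empty] at hpal
    rw [if_pos hLemp]
    rw [P_eq_C_coeff_zero ax hE hr, hpal]
    simp
  · -- loops exist
    have hLne : loopset N ≠ ∅ := by
      intro h0
      rw [← Set.ncard_eq_zero (toFinite _)] at h0
      omega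
    have hLfne : Lfin ≠ ∅ := by
      rw [hLfin, Set.Finite.toFinset_eq_empty.ne]
      exact hLne
    have hpairsub : ({∅, Lfin} : Finset (Finset α)) ⊆ Lfin.powerset := by
      intro F hF
      rw [Finset.mem_insert, Finset.mem_singleton] at hF
      rcases hF with rfl | rfl
      · exact Finset.empty_mem_powerset _
      · exact Finset.mem_powerset_self _
    have hzero : ∀ F ∈ Lfin.powerset, F ∉ ({∅, Lfin} : Finset (Finset α)) →
        (P (N ⧸ (F : Set α))).coeff 0 = 0 := by
      intro F hF hFn
      rw [Finset.mem_insert, Finset.mem_singleton] at hFn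
      push_neg at hFn
      rw [hval F hF hFn.1.ne_empty, if_neg, Polynomial.coeff_zero]
      intro heq
      apply hFn.2
      apply Finset.coe_injective
      rw [heq, hcoeL]
    rw [← Finset.sum_subset hpairsub hzero] at hpal
    rw [Finset.sum_pair (Ne.symm hLfne)] at hpal
    rw [show ((∅ : Finset α) : Set α) = (∅ : Set α) from Finset.coe_empty,
      contract_empty] at hpal
    rw [hval Lfin (Finset.mem_powerset_self _) hLfne, if_pos hcoeL] at hpal
    simp only [Polynomial.coeff_one_zero] at hpal
    rw [if_neg hLne]
    rw [P_eq_C_coeff_zero ax hE hr, show (P N).coeff 0 = 0 by omega]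
    simp

lemma P_rank_one_loopless (ax : PZaxioms P Z) {N : Matroid α} (hr : rank N = 1)
    (hl : loopset N = ∅) : P N = 1 := by
  rw [P_rank_one_aux ax (loopset N).ncard N hr rfl, if_pos hl]

lemma P_rank_one_loop (ax : PZaxioms P Z) {N : Matroid α} (hr : rank N = 1)
    (hl : loopset N ≠ ∅) : P N = 0 := by
  rw [P_rank_one_aux ax (loopset N).ncard N hr rfl, if_neg hl]


/-! ### polynomial uniqueness lemma -/

lemma poly_palindrome_small_eq_zero {k : ℕ} {r : Polynomial ℤ}
    (hpal : ∀ i ≤ k, r.coeff i = r.coeff (k - i))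
    (hdeg : 2 * r.natDegree < k ∨ r = 0) : r = 0 := by
  by_contra hne
  rcases hdeg with hdeg | rfl
  · set d := r.natDegree with hd
    have h1 : r.coeff d = r.coeff (k - d) := hpal d (by omega)
    have h2 : r.coeff (k - d) = 0 :=
      Polynomial.coeff_eq_zero_of_natDegree_lt (by omega)
    have h3 : r.coeff d ≠ 0 := by
      rw [hd]
      exact Polynomial.leadingCoeff_ne_zero.2 hne
    exact h3 (h1.trans h2)
  · exact hne rfl

/-! ### the key computation -/

variable {M Mt : Matroid α} {H : Set α} {k h : ℕ}

lemma loopset_contract_ne {S : Set α} (R : Rel M Mt H k h) (hSH : S ⊆ H)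
    (hks : k ≤ S.ncard) (hne : S ≠ H) : loopset (M ⧸ S) ≠ ∅ := by
  obtain ⟨e, heE, h0⟩ := R.loop_contract hSH hks hne
  exact fun hemp => (hemp ▸ (⟨heE, h0⟩ : e ∈ loopset (M ⧸ S)) : e ∈ (∅ : Set α))

lemma loopset_contract_H_empty (R : Rel M Mt H k h) : loopset (M ⧸ H) = ∅ := by
  rw [Set.eq_empty_iff_forall_notMem]
  rintro e ⟨heE, h0⟩
  rw [R.noloop_contract_H e heE] at h0
  omega

lemma star {P Z : Matroid α → Polynomial ℤ} (ax : PZaxioms P Z)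
    (R : Rel M Mt H k h) (pf : ℕ → Polynomial ℤ)
    (hpf : ∀ j, 1 ≤ j → j + 1 ≤ k → ∀ (M' Mt' : Matroid α) (H' : Set α),
      rank M' = k - j → Stressed M' H' → H'.ncard = h - j → IsRelaxation M' Mt' H' →
      P Mt' = P M' + pf j) :
    Z Mt = Z M + ((P Mt - P M) +
      ((∑ j ∈ Finset.Icc 1 (k - 1), (Nat.choose h j) • ((X : Polynomial ℤ) ^ j * pf j))
        - X ^ (k - 1))) := by
  classical
  have hk := R.hk
  have hkh := R.hkh
  set Efin := M.E.toFinite.toFinset with hEfin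
  have hEco : (Efin : Set α) = M.E := Set.Finite.coe_toFinset _
  have hEfin_t : Mt.E.toFinite.toFinset = Efin := by
    ext x
    simp [Set.Finite.mem_toFinset, R.groundt, hEfin]
  set Hfin := H.toFinite.toFinset with hHfin
  have hHco : (Hfin : Set α) = H := Set.Finite.coe_toFinset _
  have hHcard : Hfin.card = h := by
    rw [← Set.ncard_coe_finset, hHco, R.hcard]
  have hHsubE : Hfin ⊆ Efin := by
    rw [← Finset.coe_subset, hHco, hEco]
    exact R.hHE
  have hZM := ax.2.2.2 M
  have hZMt := ax.2.2.2 Mt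
  rw [show Mt.E.toFinite.toFinset = Efin from hEfin_t] at hZMt
  rw [show M.E.toFinite.toFinset = Efin from rfl] at hZM
  have hdiff : Z Mt - Z M = ∑ F ∈ Efin.powerset,
      (X ^ (rk Mt (F : Set α)) * P (Mt ⧸ (F : Set α))
        - X ^ (rk M (F : Set α)) * P (M ⧸ (F : Set α))) := by
    rw [hZMt, hZM, ← Finset.sum_sub_distrib]
  -- the terms with F ⊄ H vanish
  have hvanish : ∀ F ∈ Efin.powerset.filter (¬ · ⊆ Hfin),
      (X ^ (rk Mt (F : Set α)) * P (Mt ⧸ (F : Set α))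
        - X ^ (rk M (F : Set α)) * P (M ⧸ (F : Set α))) = 0 := by
    intro F hF
    rw [Finset.mem_filter, Finset.mem_powerset] at hF
    have hFE : (F : Set α) ⊆ M.E := by rw [← hEco]; exact_mod_cast hF.1
    have hFH : ¬ (F : Set α) ⊆ H := by
      intro hsub
      exact hF.2 (by rw [← Finset.coe_subset, hHco]; exact hsub)
    rw [R.rk_t_eq hFE hFH, R.contract_eq hFE hFH, sub_self]
  have hfil : Efin.powerset.filter (· ⊆ Hfin) = Hfin.powerset := by
    ext F
    simp only [Finset.mem_filter, Finset.mem_powerset]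
    exact ⟨fun hx => hx.2, fun hx => ⟨hx.trans hHsubE, hx⟩⟩
  have hdiff2 : Z Mt - Z M = ∑ F ∈ Hfin.powerset,
      (X ^ (rk Mt (F : Set α)) * P (Mt ⧸ (F : Set α))
        - X ^ (rk M (F : Set α)) * P (M ⧸ (F : Set α))) := by
    rw [hdiff, ← Finset.sum_filter_add_sum_filter_not Efin.powerset (· ⊆ Hfin), hfil,
      Finset.sum_congr rfl hvanish]
    simp
  -- per-cardinality values
  set Dval : ℕ → Polynomial ℤ := fun j =>
    if j = 0 then P Mt - P M
    else if j + 1 ≤ k then X ^ j * pf j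
    else if j = h then -X ^ (k - 1) else 0 with hDval
  have hterm : ∀ F ∈ Hfin.powerset,
      (X ^ (rk Mt (F : Set α)) * P (Mt ⧸ (F : Set α))
        - X ^ (rk M (F : Set α)) * P (M ⧸ (F : Set α))) = Dval F.card := by
    intro F hF
    rw [Finset.mem_powerset] at hF
    have hFH : (F : Set α) ⊆ H := by rw [← hHco]; exact_mod_cast hF
    have hFc : (F : Set α).ncard = F.card := Set.ncard_coe_finset F
    rcases Nat.eq_zero_or_pos F.card with h0 | hpos
    · have hFe : F = ∅ := Finset.card_eq_zero.1 h0
      subst hFe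
      rw [show ((∅ : Finset α) : Set α) = (∅ : Set α) from Finset.coe_empty,
        contract_empty, contract_empty]
      simp [hDval]
    rcases Nat.lt_or_ge F.card k with hlt | hge
    · -- 1 ≤ |F| ≤ k-1
      have hrkM : rk M (F : Set α) = F.card := by
        rw [R.rk_subset_H_small hFH (by omega), hFc]
      have hrkMt : rk Mt (F : Set α) = F.card := by
        rw [R.rk_t_small hFH (by omega), hFc]
      have hrel' := R.relaxation_contract hFH (by omega)
      have hstr' := R.stressed_contract hFH (by omega)
      have hrank' : rank (M ⧸ (F : Set α)) = k - F.card := by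
        have := R.contract_rank_small hFH (by omega)
        omega
      have hcard' : (H \ (F : Set α)).ncard = h - F.card := by
        have := Set.ncard_diff_add_ncard_of_subset hFH (toFinite _)
        rw [R.hcard] at this
        omega
      have hP := hpf F.card (by omega) (by omega) _ _ _ hrank' hstr' hcard' hrel'
      rw [hrkM, hrkMt, hP, hDval]
      simp only [if_neg (by omega : ¬ F.card = 0), if_pos (by omega : F.card + 1 ≤ k)]
      ring
    · -- |F| ≥ k
      have hks : k ≤ (F : Set α).ncard := by omega
      have hPt : P (Mt ⧸ (F : Set α)) = 0 :=
        P_rank_zero ax (R.contract_ground_t_ne hFH) (R.contract_rank_t_zero hFH hks)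
      have hrkMt : rk Mt (F : Set α) = k := R.rk_t_big hFH hks
      have hrkM : rk M (F : Set α) = k - 1 := by
        have := R.rk_subset_H_big hFH hks
        omega
      rcases em (F.card = h) with hFh | hFh
      · -- F = H
        have hFeq : (F : Set α) = H := by
          have : F = Hfin := Finset.eq_of_subset_of_card_le
            (by rw [← Finset.coe_subset, hHco]; exact hFH)
            (by omega)
          rw [this, hHco]
        have hPM : P (M ⧸ (F : Set α)) = 1 := by
          rw [hFeq]
          exact P_rank_one_loopless ax (R.contract_rank_one Subset.rfl R.hkH)
            (loopset_contract_H_empty R)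
        rw [hrkM, hrkMt, hPt, hPM, hDval]
        simp only [if_neg (by omega : ¬ F.card = 0), if_neg (by omega : ¬ F.card + 1 ≤ k),
          if_pos hFh]
        ring
      · -- F ⊊ H
        have hFne : (F : Set α) ≠ H := by
          intro heq
          apply hFh
          rw [← hFc, heq, R.hcard]
        have hPM : P (M ⧸ (F : Set α)) = 0 :=
          P_rank_one_loop ax (R.contract_rank_one hFH hks)
            (loopset_contract_ne R hFH hks hFne)
        rw [hrkM, hrkMt, hPt, hPM, hDval]
        simp only [if_neg (by omega : ¬ F.card = 0), if_neg (by omega : ¬ F.card + 1 ≤ k),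
          if_neg hFh]
        ring
  have hdiff3 : Z Mt - Z M = ∑ j ∈ Finset.range (h + 1), (Nat.choose h j) • Dval j := by
    rw [hdiff2, Finset.sum_congr rfl hterm, ← hHcard, ← Finset.sum_powerset_apply_card]
  -- evaluate the sum over j
  have hsummand : ∀ j ∈ Finset.range (h + 1), (Nat.choose h j) • Dval j
      = (if j = 0 then P Mt - P M else 0)
        + ((if 1 ≤ j ∧ j + 1 ≤ k then (Nat.choose h j) • ((X : Polynomial ℤ) ^ j * pf j) else 0)
          + (if j = h then -X ^ (k - 1) else 0)) := by
    intro j hj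
    rcases Nat.eq_zero_or_pos j with rfl | hjpos
    · rw [if_neg (show ¬ (0 : ℕ) = h by omega), if_pos rfl,
        if_neg (show ¬ (1 ≤ 0 ∧ 0 + 1 ≤ k) by omega)]
      simp [hDval]
    rcases Nat.lt_or_ge j k with hlt | hge
    · rw [hDval]
      simp only [if_neg (by omega : ¬ j = 0), if_pos (by omega : j + 1 ≤ k),
        if_pos (⟨by omega, by omega⟩ : 1 ≤ j ∧ j + 1 ≤ k),
        if_neg (by omega : ¬ j = h)]
      ring
    · rcases em (j = h) with rfl | hjh
      · rw [hDval]
        simp only [if_neg (by omega : ¬ j = 0), if_neg (by omega : ¬ j + 1 ≤ k),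
          if_pos rfl, if_neg (by omega : ¬ (1 ≤ j ∧ j + 1 ≤ k)), Nat.choose_self, one_smul]
        ring
      · rw [hDval]
        simp only [if_neg (by omega : ¬ j = 0), if_neg (by omega : ¬ j + 1 ≤ k),
          if_neg hjh, if_neg (by omega : ¬ (1 ≤ j ∧ j + 1 ≤ k)), smul_zero]
        ring
  have hfinal : Z Mt - Z M = (P Mt - P M) +
      ((∑ j ∈ Finset.Icc 1 (k - 1), (Nat.choose h j) • ((X : Polynomial ℤ) ^ j * pf j))
        - X ^ (k - 1)) := by
    rw [hdiff3, Finset.sum_congr rfl hsummand, Finset.sum_add_distrib, Finset.sum_add_distrib]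
    have e1 : ∑ j ∈ Finset.range (h + 1), (if j = 0 then P Mt - P M else 0) = P Mt - P M := by
      rw [Finset.sum_ite_eq' (Finset.range (h + 1)) 0 (fun _ => P Mt - P M),
        if_pos (Finset.mem_range.2 (by omega))]
    have e3 : ∑ j ∈ Finset.range (h + 1), (if j = h then -(X : Polynomial ℤ) ^ (k - 1) else 0)
        = -X ^ (k - 1) := by
      rw [Finset.sum_ite_eq' (Finset.range (h + 1)) h (fun _ => -(X : Polynomial ℤ) ^ (k - 1)),
        if_pos (Finset.mem_range.2 (by omega))]
    have e2 : ∑ j ∈ Finset.range (h + 1),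
        (if 1 ≤ j ∧ j + 1 ≤ k then (Nat.choose h j) • ((X : Polynomial ℤ) ^ j * pf j) else 0)
        = ∑ j ∈ Finset.Icc 1 (k - 1), (Nat.choose h j) • ((X : Polynomial ℤ) ^ j * pf j) := by
      rw [← Finset.sum_filter]
      congr 1
      ext j
      simp only [Finset.mem_filter, Finset.mem_range, Finset.mem_Icc]
      omega
    rw [e1, e2, e3]
    ring
  exact sub_eq_iff_eq_add'.1 hfinal


/-! ### existence of the difference polynomials -/

def Good (k h : ℕ) (p q : Polynomial ℤ) : Prop :=
  ∀ (β : Type) [Fintype β], ∀ (P Z : Matroid β → Polynomial ℤ), PZaxioms P Z →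
    ∀ (M Mt : Matroid β) (Hs : Set β), rank M = k → Stressed M Hs → Hs.ncard = h →
      IsRelaxation M Mt Hs → P Mt = P M + p ∧ Z Mt = Z M + q

lemma natDegree_le_half {k : ℕ} {p : Polynomial ℤ} (hp : p = 0 ∨ 2 * p.natDegree < k) :
    p.natDegree ≤ (k - 1) / 2 := by
  rcases hp with rfl | hp
  · simp
  · omega

lemma key : ∀ k, 1 ≤ k → ∀ h, k ≤ h → ∃ p q : Polynomial ℤ, Good k h p q := by
  intro k
  induction k using Nat.strong_induction_on with
  | _ k IH =>
  intro hk h hkh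
  have hIH : ∀ j : ℕ, ∃ p q : Polynomial ℤ, (1 ≤ j → j + 1 ≤ k → Good (k - j) (h - j) p q) := by
    intro j
    rcases em (1 ≤ j ∧ j + 1 ≤ k) with ⟨hj1, hjk⟩ | hj
    · obtain ⟨p, q, hG⟩ := IH (k - j) (by omega) (by omega) (h - j) (by omega)
      exact ⟨p, q, fun _ _ => hG⟩
    · exact ⟨0, 0, fun h1 h2 => absurd ⟨h1, h2⟩ hj⟩
  choose pf zf hpf using hIH
  set Q : Polynomial ℤ := (∑ j ∈ Finset.Icc 1 (k - 1),
    (Nat.choose h j) • ((X : Polynomial ℤ) ^ j * pf j)) - X ^ (k - 1) with hQ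
  have hstar : ∀ (β : Type) [Fintype β], ∀ (P Z : Matroid β → Polynomial ℤ),
      PZaxioms P Z → ∀ (M Mt : Matroid β) (Hs : Set β), rank M = k → Stressed M Hs →
      Hs.ncard = h → IsRelaxation M Mt Hs → Z Mt = Z M + ((P Mt - P M) + Q) := by
    intro β _ P Z ax M Mt Hs hr hs hc hrel
    rw [hQ]
    exact star ax ⟨hk, hkh, hr, hs, hc, hrel⟩ pf
      (fun j hj1 hj2 M' Mt' H' a b c d => (hpf j hj1 hj2 β P Z ax M' Mt' H' a b c d).1)
  by_cases hex : ∃ (β : Type) (_ : Fintype β) (P Z : Matroid β → Polynomial ℤ)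
      (_ : PZaxioms P Z) (M Mt : Matroid β) (Hs : Set β),
      rank M = k ∧ Stressed M Hs ∧ Hs.ncard = h ∧ IsRelaxation M Mt Hs
  · obtain ⟨β₀, i₀, P₀, Z₀, ax₀, M₀, Mt₀, H₀, h1₀, h2₀, h3₀, h4₀⟩ := hex
    refine ⟨P₀ Mt₀ - P₀ M₀, (P₀ Mt₀ - P₀ M₀) + Q, ?_⟩
    have hst₀ := hstar β₀ P₀ Z₀ ax₀ M₀ Mt₀ H₀ h1₀ h2₀ h3₀ h4₀
    have R₀ : Rel M₀ Mt₀ H₀ k h := ⟨hk, hkh, h1₀, h2₀, h3₀, h4₀⟩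
    intro β _ P Z ax M Mt Hs hr hs hc hrel
    have hst := hstar β P Z ax M Mt Hs hr hs hc hrel
    have R : Rel M Mt Hs k h := ⟨hk, hkh, hr, hs, hc, hrel⟩
    -- the two Z-differences
    have e1 : Z Mt - Z M = (P Mt - P M) + Q := by rw [hst]; ring
    have e2 : Z₀ Mt₀ - Z₀ M₀ = (P₀ Mt₀ - P₀ M₀) + Q := by rw [hst₀]; ring
    set a := P Mt - P M with ha
    set p := P₀ Mt₀ - P₀ M₀ with hp
    have hre : a - p = (Z Mt - Z M) - (Z₀ Mt₀ - Z₀ M₀) := by rw [e1, e2]; ring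
    -- palindromicity
    have pal : ∀ i ≤ k, (a - p).coeff i = (a - p).coeff (k - i) := by
      intro i hi
      have q1 := (ax.2.2.1 Mt).2 i (by rw [R.rank_t]; omega)
      rw [R.rank_t] at q1
      have q2 := (ax.2.2.1 M).2 i (by rw [hr]; omega)
      rw [hr] at q2
      have q3 := (ax₀.2.2.1 Mt₀).2 i (by rw [R₀.rank_t]; omega)
      rw [R₀.rank_t] at q3
      have q4 := (ax₀.2.2.1 M₀).2 i (by rw [h1₀]; omega)
      rw [h1₀] at q4
      rw [hre]
      simp only [Polynomial.coeff_sub]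
      rw [q1, q2, q3, q4]
    -- degree bound
    have hEne : M.E ≠ ∅ := R.ground_ne
    have hEtne : Mt.E ≠ ∅ := by rw [R.groundt]; exact hEne
    have hEne₀ : M₀.E ≠ ∅ := R₀.ground_ne
    have hEtne₀ : Mt₀.E ≠ ∅ := by rw [R₀.groundt]; exact hEne₀
    have d1 : (P Mt).natDegree ≤ (k - 1) / 2 := by
      refine natDegree_le_half ?_
      rcases ax.2.1 Mt hEtne with hh | hh
      · exact Or.inl hh
      · rw [R.rank_t] at hh; exact Or.inr hh
    have d2 : (P M).natDegree ≤ (k - 1) / 2 := by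
      refine natDegree_le_half ?_
      rcases ax.2.1 M hEne with hh | hh
      · exact Or.inl hh
      · rw [hr] at hh; exact Or.inr hh
    have d3 : (P₀ Mt₀).natDegree ≤ (k - 1) / 2 := by
      refine natDegree_le_half ?_
      rcases ax₀.2.1 Mt₀ hEtne₀ with hh | hh
      · exact Or.inl hh
      · rw [R₀.rank_t] at hh; exact Or.inr hh
    have d4 : (P₀ M₀).natDegree ≤ (k - 1) / 2 := by
      refine natDegree_le_half ?_
      rcases ax₀.2.1 M₀ hEne₀ with hh | hh
      · exact Or.inl hh
      · rw [h1₀] at hh; exact Or.inr hh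
    have da : a.natDegree ≤ (k - 1) / 2 :=
      le_trans (Polynomial.natDegree_sub_le _ _) (by omega)
    have dp : p.natDegree ≤ (k - 1) / 2 :=
      le_trans (Polynomial.natDegree_sub_le _ _) (by omega)
    have dr : (a - p).natDegree ≤ (k - 1) / 2 :=
      le_trans (Polynomial.natDegree_sub_le _ _) (by omega)
    have hzero : a - p = 0 := by
      refine poly_palindrome_small_eq_zero pal ?_
      rcases em (a - p = 0) with h0 | h0
      · exact Or.inr h0
      · exact Or.inl (by omega)
    have hap : a = p := sub_eq_zero.1 hzero
    constructor
    · rw [← hap, ha]; ring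
    · rw [hst, ← hap, ha]
  · refine ⟨0, 0, ?_⟩
    intro β _ P Z ax M Mt Hs h1 h2 h3 h4
    exact absurd ⟨β, ‹_›, P, Z, ax, M, Mt, Hs, h1, h2, h3, h4⟩ hex


/-- For integers `h ≥ k ≥ 1` there is a polynomial `z_{k,h}(t) ∈ ℤ[t]`,
depending only on `k` and `h`, such that for every matroid `M` of rank `k`, every
stressed hyperplane `H` of `M` with `|H| = h`, and the relaxation `M̃` of `M` at `H`,
one has `Z_{M̃}(t) = Z_M(t) + z_{k,h}(t)`. -/
theorem relaxation_Z_polynomial (k h : ℕ) (hk : 1 ≤ k) (hkh : k ≤ h) :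
    ∃ z : Polynomial ℤ,
      ∀ (β : Type) [Fintype β],
        ∀ (P Z : Matroid β → Polynomial ℤ), PZaxioms P Z →
          ∀ (M Mt : Matroid β) (H : Set β),
            rank M = k → Stressed M H → H.ncard = h → IsRelaxation M Mt H →
            Z Mt = Z M + z := by
  obtain ⟨p, q, hG⟩ := key k hk h hkh
  refine ⟨q, ?_⟩
  intro β _ P Z ax M Mt H h1 h2 h3 h4
  exact (hG β P Z ax M Mt H h1 h2 h3 h4).2


end KLPaper
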